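/- Let c ∈ (0,1) and set θ* = log(c/(1−c)). Then for any η ∈ [0,1] and any f ∈ ℝ, the conditional cost-sensitive regret of the thresholded prediction sgn(f − θ*) is bounded by the conditional logistic regret: r_c(η, sgn(f − θ*)) ≤ sqrt(r_log(η,f)/2). -/

import Mathlib

/-- Sign function with the convention sgn(0) = 1. -/
noncomputable def sgn (x : ℝ) : ℝ := if 0 ≤ x then 1 else -1

/-- Conditional cost-sensitive classification loss
    ℓ_c(η,h) = c(1−η)·1[h=1] + (1−c)η·1[h=−1]. -/
noncomputable def condCostLoss (c η h : ℝ) : ℝ :=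
  c * (1 - η) * (if h = 1 then 1 else 0) + (1 - c) * η * (if h = -1 then 1 else 0)

/-- Conditional cost-sensitive regret:
    r_c(η,h) = ℓ_c(η,h) − min_{h'∈{−1,1}} ℓ_c(η,h'). -/
noncomputable def condCostRegret (c η h : ℝ) : ℝ :=
  condCostLoss c η h - min (condCostLoss c η 1) (condCostLoss c η (-1))

/-- Conditional logistic loss ℓ_log(η,f) = (1−η)·log(1+e^f) + η·log(1+e^{−f}). -/
noncomputable def condLogLoss (η f : ℝ) : ℝ :=
  (1 - η) * Real.log (1 + Real.exp f) + η * Real.log (1 + Real.exp (-f))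

/-- Conditional logistic regret r_log(η,f) = ℓ_log(η,f) − inf_{f'} ℓ_log(η,f'). -/
noncomputable def condLogRegret (η f : ℝ) : ℝ :=
  condLogLoss η f - ⨅ f' : ℝ, condLogLoss η f'

open Real Set

section Aux

/-- Core monotone lemma for the η = 0 case: 2p² ≤ -log(1-p) on [0,1). -/
private lemma aux0 (p : ℝ) (hp0 : 0 ≤ p) (hp1 : p < 1) : 2 * p ^ 2 ≤ -Real.log (1 - p) := by
  set G : ℝ → ℝ := fun t => -Real.log (1 - t) - 2 * t ^ 2 with hG
  have key : MonotoneOn G (Icc 0 p) := by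
    apply monotoneOn_of_deriv_nonneg (convex_Icc 0 p)
    · apply ContinuousOn.sub
      · apply ContinuousOn.neg
        apply ContinuousOn.log
        · fun_prop
        · intro x hx
          have : x ≤ p := hx.2
          nlinarith [hx.1]
      · fun_prop
    · intro x hx
      rw [interior_Icc] at hx
      have hx1 : x < 1 := lt_trans hx.2 hp1
      have h1 : (1 : ℝ) - x ≠ 0 := by linarith
      have : HasDerivAt G (1 / (1 - x) - 4 * x) x := by
        have hlog : HasDerivAt (fun t : ℝ => Real.log (1 - t)) (-(1 / (1 - x))) x := by
          have h2 : HasDerivAt (fun t : ℝ => 1 - t) (-1) x := by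
            simpa using (hasDerivAt_id' x).const_sub (1:ℝ)
          have := (Real.hasDerivAt_log h1).comp x h2
          refine this.congr_deriv ?_
          field_simp
        have hsq : HasDerivAt (fun t : ℝ => 2 * t ^ 2) (4 * x) x := by
          have := (hasDerivAt_pow 2 x).const_mul (2:ℝ)
          refine this.congr_deriv ?_
          ring
        exact (hlog.neg.sub hsq).congr_deriv (by ring)
      exact this.differentiableAt.differentiableWithinAt
    · intro x hx
      rw [interior_Icc] at hx
      have hx1 : x < 1 := lt_trans hx.2 hp1
      have h1 : (0:ℝ) < 1 - x := by linarith
      have hD : HasDerivAt G (1 / (1 - x) - 4 * x) x := by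
        have hlog : HasDerivAt (fun t : ℝ => Real.log (1 - t)) (-(1 / (1 - x))) x := by
          have h2 : HasDerivAt (fun t : ℝ => 1 - t) (-1) x := by
            simpa using (hasDerivAt_id' x).const_sub (1:ℝ)
          have := (Real.hasDerivAt_log h1.ne').comp x h2
          refine this.congr_deriv ?_
          field_simp
        have hsq : HasDerivAt (fun t : ℝ => 2 * t ^ 2) (4 * x) x := by
          have := (hasDerivAt_pow 2 x).const_mul (2:ℝ)
          refine this.congr_deriv ?_
          ring
        exact (hlog.neg.sub hsq).congr_deriv (by ring)
      rw [hD.deriv]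
      have : 1 / (1 - x) - 4 * x = (1 - 2*x)^2 / (1 - x) := by
        field_simp
        ring
      rw [this]
      positivity
  have h0 : G 0 ≤ G p := key (by simp [hp0]) (by simp [hp0]) hp0
  simp only [hG] at h0
  norm_num at h0
  linarith

/-- Core monotone lemma for the η > 0, η ≤ p case of binary Pinsker. -/
private lemma aux_pos (η : ℝ) (hη0 : 0 < η) (p : ℝ) (hηp : η ≤ p) (hp1 : p < 1) :
    2 * (η - p) ^ 2 ≤ η * (Real.log η - Real.log p) + (1 - η) * (Real.log (1 - η) - Real.log (1 - p)) := by
  set F : ℝ → ℝ := fun t => η * (Real.log η - Real.log t) + (1 - η) * (Real.log (1 - η) - Real.log (1 - t)) - 2 * (η - t) ^ 2 with hF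
  have hderiv : ∀ x ∈ Ioo η p, HasDerivAt F (-η / x + (1 - η) / (1 - x) + 4 * (η - x)) x := by
    intro x hx
    have hx0 : 0 < x := lt_of_lt_of_le hη0 hx.1.le
    have hx1 : (0:ℝ) < 1 - x := by linarith [hx.2.trans_le (le_refl p), hp1, hx.2]
    have hlogx : HasDerivAt (fun t : ℝ => Real.log t) (1 / x) x := by
      simpa [one_div] using Real.hasDerivAt_log hx0.ne'
    have hlog1x : HasDerivAt (fun t : ℝ => Real.log (1 - t)) (-(1 / (1 - x))) x := by
      have h2 : HasDerivAt (fun t : ℝ => 1 - t) (-1) x := by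
        simpa using (hasDerivAt_id' x).const_sub (1:ℝ)
      have := (Real.hasDerivAt_log hx1.ne').comp x h2
      refine this.congr_deriv ?_
      field_simp
    have h1 : HasDerivAt (fun t : ℝ => η * (Real.log η - Real.log t)) (-η / x) x := by
      have := ((hasDerivAt_const x (Real.log η)).sub hlogx).const_mul η
      refine this.congr_deriv ?_
      field_simp
      ring
    have h2 : HasDerivAt (fun t : ℝ => (1 - η) * (Real.log (1 - η) - Real.log (1 - t))) ((1 - η) / (1 - x)) x := by
      have := ((hasDerivAt_const x (Real.log (1 - η))).sub hlog1x).const_mul (1 - η)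
      refine this.congr_deriv ?_
      field_simp
      ring
    have h3 : HasDerivAt (fun t : ℝ => 2 * (η - t) ^ 2) (-(4 * (η - x))) x := by
      have hin : HasDerivAt (fun t : ℝ => η - t) (-1) x := by
        simpa using (hasDerivAt_id' x).const_sub η
      have := ((hin.pow 2).const_mul (2:ℝ))
      refine this.congr_deriv ?_
      ring
    have := (h1.add h2).sub h3
    refine this.congr_deriv ?_
    ring
  have key : MonotoneOn F (Icc η p) := by
    apply monotoneOn_of_deriv_nonneg (convex_Icc η p)
    · apply ContinuousOn.sub
      · apply ContinuousOn.add
        · apply ContinuousOn.mul continuousOn_const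
          apply ContinuousOn.sub continuousOn_const
          apply ContinuousOn.log (by fun_prop)
          intro x hx
          exact ne_of_gt (lt_of_lt_of_le hη0 hx.1)
        · apply ContinuousOn.mul continuousOn_const
          apply ContinuousOn.sub continuousOn_const
          apply ContinuousOn.log (by fun_prop)
          intro x hx
          have : x ≤ p := hx.2
          intro h; nlinarith
      · fun_prop
    · intro x hx
      rw [interior_Icc] at hx
      exact (hderiv x hx).differentiableAt.differentiableWithinAt
    · intro x hx
      rw [interior_Icc] at hx
      rw [(hderiv x hx).deriv]
      have hx0 : 0 < x := lt_of_lt_of_le hη0 hx.1.le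
      have hx1 : (0:ℝ) < 1 - x := by linarith [hx.2, hp1]
      have heq : -η / x + (1 - η) / (1 - x) + 4 * (η - x) = (x - η) * (1 - 2*x)^2 / (x * (1 - x)) := by
        field_simp
        ring
      rw [heq]
      have : 0 ≤ x - η := by linarith [hx.1]
      positivity
  have h0 : F η ≤ F p := key (by simp [hηp]) (by simp [hηp]) hηp
  simp only [hF] at h0
  norm_num at h0 ⊢
  linarith

private lemma pinsker_half (η p : ℝ) (hη0 : 0 ≤ η) (hηp : η ≤ p) (hp1 : p < 1) :
    2 * (η - p) ^ 2 ≤ η * (Real.log η - Real.log p) + (1 - η) * (Real.log (1 - η) - Real.log (1 - p)) := by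
  rcases eq_or_lt_of_le hη0 with h | h
  · subst h
    have := aux0 p hηp hp1
    simp only [zero_sub, neg_sq, zero_mul, sub_zero, one_mul, Real.log_one, zero_sub]
    norm_num
    linarith
  · exact aux_pos η h p hηp hp1

/-- Binary Pinsker inequality: KL(η‖p) ≥ 2(η−p)². -/
private lemma pinsker (η p : ℝ) (hη0 : 0 ≤ η) (hη1 : η ≤ 1) (hp0 : 0 < p) (hp1 : p < 1) :
    2 * (η - p) ^ 2 ≤ η * (Real.log η - Real.log p) + (1 - η) * (Real.log (1 - η) - Real.log (1 - p)) := by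
  rcases le_or_gt η p with h | h
  · exact pinsker_half η p hη0 h hp1
  · have := pinsker_half (1 - η) (1 - p) (by linarith) (by linarith) (by linarith)
    have e1 : (1 : ℝ) - (1 - η) = η := by ring
    have e2 : (1 : ℝ) - (1 - p) = p := by ring
    rw [e1, e2] at this
    nlinarith [this]

private lemma loss_nonneg (η : ℝ) (hη0 : 0 ≤ η) (hη1 : η ≤ 1) (f : ℝ) : 0 ≤ condLogLoss η f := by
  unfold condLogLoss
  have h1 : 0 ≤ Real.log (1 + Real.exp f) := Real.log_nonneg (by linarith [Real.exp_pos f])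
  have h2 : 0 ≤ Real.log (1 + Real.exp (-f)) := Real.log_nonneg (by linarith [Real.exp_pos (-f)])
  have : 0 ≤ 1 - η := by linarith
  positivity

private lemma bdd (η : ℝ) (hη0 : 0 ≤ η) (hη1 : η ≤ 1) : BddBelow (Set.range (condLogLoss η)) :=
  ⟨0, by rintro x ⟨f, rfl⟩; exact loss_nonneg η hη0 hη1 f⟩

/-- The infimum of the conditional logistic loss is at most the binary entropy. -/
private lemma iInf_le_H (η : ℝ) (hη0 : 0 ≤ η) (hη1 : η ≤ 1) :
    (⨅ f' : ℝ, condLogLoss η f') ≤ -(η * Real.log η + (1 - η) * Real.log (1 - η)) := by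
  rcases eq_or_lt_of_le hη0 with h0 | h0
  · subst h0
    simp only [Real.log_one, mul_zero, sub_zero, one_mul, zero_mul, zero_add, neg_zero]
    have : ∀ ε > (0:ℝ), (⨅ f' : ℝ, condLogLoss 0 f') ≤ 0 + ε := by
      intro ε hε
      have hexp : (0:ℝ) < Real.exp ε - 1 := by
        linarith [Real.add_one_lt_exp (ne_of_gt hε)]
      calc (⨅ f' : ℝ, condLogLoss 0 f') ≤ condLogLoss 0 (Real.log (Real.exp ε - 1)) :=
            ciInf_le (bdd 0 le_rfl one_pos.le) _
        _ = 0 + ε := by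
            unfold condLogLoss
            rw [Real.exp_log hexp]
            simp only [sub_zero, one_mul, zero_mul, add_zero, zero_add]
            rw [show (1:ℝ) + (Real.exp ε - 1) = Real.exp ε by ring, Real.log_exp]
    exact le_of_forall_pos_le_add this
  rcases eq_or_lt_of_le hη1 with h1 | h1
  · subst h1
    simp only [sub_self, zero_mul, add_zero, Real.log_one, mul_zero]
    have : ∀ ε > (0:ℝ), (⨅ f' : ℝ, condLogLoss 1 f') ≤ -0 + ε := by
      intro ε hε
      have hexp : (0:ℝ) < Real.exp ε - 1 := by
        linarith [Real.add_one_lt_exp (ne_of_gt hε)]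
      calc (⨅ f' : ℝ, condLogLoss 1 f') ≤ condLogLoss 1 (-Real.log (Real.exp ε - 1)) :=
            ciInf_le (bdd 1 zero_le_one le_rfl) _
        _ = -0 + ε := by
            unfold condLogLoss
            rw [neg_neg, Real.exp_log hexp]
            simp only [sub_self, zero_mul, one_mul, zero_add]
            rw [show (1:ℝ) + (Real.exp ε - 1) = Real.exp ε by ring, Real.log_exp, neg_zero, zero_add]
    exact le_of_forall_pos_le_add this
  · have h1η : (0:ℝ) < 1 - η := by linarith
    calc (⨅ f' : ℝ, condLogLoss η f') ≤ condLogLoss η (Real.log (η / (1 - η))) :=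
          ciInf_le (bdd η hη0 hη1) _
      _ = -(η * Real.log η + (1 - η) * Real.log (1 - η)) := by
          unfold condLogLoss
          have hpos : (0:ℝ) < η / (1 - η) := div_pos h0 h1η
          have e1 : 1 + Real.exp (Real.log (η / (1 - η))) = (1 - η)⁻¹ := by
            rw [Real.exp_log hpos]; field_simp; ring
          have e2 : 1 + Real.exp (-Real.log (η / (1 - η))) = η⁻¹ := by
            rw [Real.exp_neg, Real.exp_log hpos]; field_simp; ring
          rw [e1, e2, Real.log_inv, Real.log_inv]; ring

/-- Lower bound on the logistic regret via Pinsker, with p = σ(f). -/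
private lemma regret_ge (η : ℝ) (hη0 : 0 ≤ η) (hη1 : η ≤ 1) (f : ℝ) :
    2 * (η - 1 / (1 + Real.exp (-f))) ^ 2 ≤ condLogRegret η f := by
  set E := Real.exp (-f) with hE
  have hEpos : 0 < E := Real.exp_pos _
  have h1E : (0:ℝ) < 1 + E := by linarith
  set p := 1 / (1 + E) with hp
  have hp0 : 0 < p := by positivity
  have hp1 : p < 1 := by rw [hp, div_lt_one h1E]; linarith
  have hlogp : Real.log p = -Real.log (1 + E) := by
    rw [hp, one_div, Real.log_inv]
  have h1p : 1 - p = E / (1 + E) := by rw [hp]; field_simp; ring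
  have hlog1p : Real.log (1 - p) = -f - Real.log (1 + E) := by
    rw [h1p, Real.log_div hEpos.ne' h1E.ne', hE, Real.log_exp]
  have hexpf : 1 + Real.exp f = Real.exp f * (1 + E) := by
    have : Real.exp f * E = 1 := by rw [hE, ← Real.exp_add]; simp
    nlinarith [this]
  have hlogef : Real.log (1 + Real.exp f) = f + Real.log (1 + E) := by
    rw [hexpf, Real.log_mul (Real.exp_pos f).ne' h1E.ne', Real.log_exp]
  have hloss : condLogLoss η f = -(η * Real.log p + (1 - η) * Real.log (1 - p)) := by
    unfold condLogLoss
    rw [hlogef, hlogp, hlog1p]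
    ring
  have hinf := iInf_le_H η hη0 hη1
  have hpin := pinsker η p hη0 hη1 hp0 hp1
  unfold condLogRegret
  rw [hloss]
  linarith

end Aux

/-- For c ∈ (0,1) and θ* = log(c/(1−c)), the conditional cost-sensitive regret of the
    thresholded prediction sgn(f − θ*) is at most sqrt(r_log(η,f)/2). -/
theorem condCostRegret_le_sqrt_condLogRegret (c : ℝ) (hc : 0 < c ∧ c < 1)
    (η : ℝ) (hη : 0 ≤ η ∧ η ≤ 1) (f : ℝ) :
    condCostRegret c η (sgn (f - Real.log (c / (1 - c)))) ≤
      Real.sqrt (condLogRegret η f / 2) := by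
  obtain ⟨hc0, hc1⟩ := hc
  obtain ⟨hη0, hη1⟩ := hη
  have h1c : (0:ℝ) < 1 - c := by linarith
  set θ := Real.log (c / (1 - c)) with hθ
  set p := 1 / (1 + Real.exp (-f)) with hp
  have hEpos : 0 < Real.exp (-f) := Real.exp_pos _
  have h1E : (0:ℝ) < 1 + Real.exp (-f) := by linarith
  have hp0 : 0 < p := by positivity
  have hp1 : p < 1 := by rw [hp, div_lt_one h1E]; linarith
  have hexpθ : Real.exp (-θ) = (1 - c) / c := by
    rw [hθ, ← Real.log_inv, Real.exp_log (by positivity)]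
    rw [inv_div]
  have hreg := regret_ge η hη0 hη1 f
  have hsq : (p - η) ^ 2 ≤ condLogRegret η f / 2 := by nlinarith
  have habs : |p - η| ≤ Real.sqrt (condLogRegret η f / 2) := by
    rw [← Real.sqrt_sq_eq_abs]
    exact Real.sqrt_le_sqrt hsq
  have hl1 : condCostLoss c η 1 = c * (1 - η) := by unfold condCostLoss; norm_num
  have hl2 : condCostLoss c η (-1) = (1 - c) * η := by unfold condCostLoss; norm_num
  rcases le_or_gt 0 (f - θ) with hf | hf
  · -- sgn = 1, p ≥ c
    have hcp : c ≤ p := by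
      have h1 : Real.exp (-f) ≤ Real.exp (-θ) := Real.exp_le_exp.mpr (by linarith)
      rw [hexpθ] at h1
      rw [hp, le_div_iff₀ h1E]
      have : c * (1 + Real.exp (-f)) ≤ c * (1 + (1 - c) / c) := by nlinarith
      calc c * (1 + Real.exp (-f)) ≤ c * (1 + (1 - c) / c) := this
        _ = 1 := by field_simp; ring
    have hs : sgn (f - θ) = 1 := by rw [sgn, if_pos hf]
    rw [hs]
    unfold condCostRegret
    rw [hl1, hl2]
    rcases le_or_gt c η with hcη | hcη
    · rw [min_eq_left (by nlinarith)]
      simpa using Real.sqrt_nonneg (condLogRegret η f / 2)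
    · rw [min_eq_right (by nlinarith)]
      have : c * (1 - η) - (1 - c) * η = c - η := by ring
      rw [this]
      calc c - η ≤ p - η := by linarith
        _ ≤ |p - η| := le_abs_self _
        _ ≤ _ := habs
  · -- sgn = -1, p ≤ c
    have hcp : p ≤ c := by
      have h1 : Real.exp (-θ) ≤ Real.exp (-f) := Real.exp_le_exp.mpr (by linarith)
      rw [hexpθ] at h1
      rw [hp, div_le_iff₀ h1E]
      have : c * (1 + (1 - c) / c) ≤ c * (1 + Real.exp (-f)) := by nlinarith
      calc (1:ℝ) = c * (1 + (1 - c) / c) := by field_simp; ring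
        _ ≤ c * (1 + Real.exp (-f)) := this
    have hs : sgn (f - θ) = -1 := by rw [sgn, if_neg (not_le.mpr hf)]
    rw [hs]
    unfold condCostRegret
    rw [hl1, hl2]
    rcases le_or_gt η c with hcη | hcη
    · rw [min_eq_right (by nlinarith)]
      simpa using Real.sqrt_nonneg (condLogRegret η f / 2)
    · rw [min_eq_left (by nlinarith)]
      have : (1 - c) * η - c * (1 - η) = η - c := by ring
      rw [this]
      calc η - c ≤ η - p := by linarith
        _ ≤ |p - η| := by rw [abs_sub_comm]; exact le_abs_self _
        _ ≤ _ := habs
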